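/- arXiv:1505.08126 — 2 statements merged into one kernel-verified Lean document; each statement's English description precedes it below -/
import Mathlib

section
/- Let A be an n×n Hermitian matrix with ‖A‖ ≤ 1, and suppose w is a unit vector with ‖w - v‖ ≤ δ for some unit eigenvector v of A, where δ ≤ 1/4. Let z = A·w, let i₀ = argmax_{i∈[n]} |w_i|, and set c = z_{i₀} / w_{i₀}. Then ‖A·w - c·w‖ ≤ 3δ√n. -/
set_option maxHeartbeats 1000000 in
/-- If a unit vector `w` is `δ`-close (`δ ≤ 1/4`) to a unit eigenvector `v` of a
Hermitian operator `A` with `‖A‖ ≤ 1`, then with `i₀` a coordinate of maximal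
magnitude of `w` and `c = (Aw)_{i₀} / w_{i₀}`, we have `‖Aw - c·w‖ ≤ 3δ√n`. -/
theorem approx_eigvec_rayleigh (n : ℕ) (hn : 0 < n)
    (A : EuclideanSpace ℂ (Fin n) →L[ℂ] EuclideanSpace ℂ (Fin n))
    (hA : IsSelfAdjoint A) (hAnorm : ‖A‖ ≤ 1)
    (w v : EuclideanSpace ℂ (Fin n)) (hw : ‖w‖ = 1) (hv : ‖v‖ = 1)
    (lam : ℝ) (heig : A v = (lam : ℂ) • v)
    (δ : ℝ) (hδpos : 0 < δ) (hδ : δ ≤ 1 / 4) (hclose : ‖w - v‖ ≤ δ)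
    (i₀ : Fin n) (hmax : ∀ i, ‖w i‖ ≤ ‖w i₀‖)
    (c : ℂ) (hc : c = A w i₀ / w i₀) :
    ‖A w - c • w‖ ≤ 3 * δ * Real.sqrt n := by
  -- |lam| ≤ 1
  have hlam : |lam| ≤ 1 := by
    have h1 : ‖A v‖ ≤ 1 := by
      calc ‖A v‖ ≤ ‖A‖ * ‖v‖ := A.le_opNorm v
      _ ≤ 1 := by rw [hv, mul_one]; exact hAnorm
    have h2 : ‖A v‖ = |lam| := by
      rw [heig, norm_smul, hv, mul_one, Complex.norm_real, Real.norm_eq_abs]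
    linarith [h2 ▸ h1]
  -- residual bound
  set r : EuclideanSpace ℂ (Fin n) := A w - (lam : ℂ) • w with hr
  have hRbound : ‖r‖ ≤ 2 * δ := by
    have heq : r = A (w - v) - (lam : ℂ) • (w - v) := by
      rw [hr, map_sub, heig, smul_sub]; abel
    calc ‖r‖ = ‖A (w - v) - (lam : ℂ) • (w - v)‖ := by rw [heq]
    _ ≤ ‖A (w - v)‖ + ‖(lam : ℂ) • (w - v)‖ := norm_sub_le _ _
    _ ≤ ‖A‖ * ‖w - v‖ + ‖(lam : ℂ)‖ * ‖w - v‖ := by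
        gcongr
        · exact A.le_opNorm _
        · exact le_of_eq (norm_smul _ _)
    _ ≤ 1 * δ + 1 * δ := by
        have hwv : (0:ℝ) ≤ ‖w - v‖ := norm_nonneg _
        have : ‖(lam : ℂ)‖ ≤ 1 := by rwa [Complex.norm_real, Real.norm_eq_abs]
        gcongr
    _ = 2 * δ := by ring
  set R := ‖r‖ with hRdef
  set t := ‖w i₀‖ with htdef
  set s := ‖r i₀‖ with hsdef
  -- sums of squares
  have hsumw : ∑ i, ‖w i‖ ^ 2 = 1 := by
    have := EuclideanSpace.norm_eq w
    rw [hw] at this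
    have h0 : (0:ℝ) ≤ ∑ i, ‖w i‖ ^ 2 :=
      Finset.sum_nonneg fun i _ => sq_nonneg _
    nlinarith [Real.sq_sqrt h0, this]
  have hnt : 1 ≤ (n : ℝ) * t ^ 2 := by
    calc (1:ℝ) = ∑ i, ‖w i‖ ^ 2 := hsumw.symm
    _ ≤ ∑ _i : Fin n, t ^ 2 := by
        apply Finset.sum_le_sum
        intro i _
        have := hmax i
        nlinarith [norm_nonneg (w i)]
    _ = (n : ℝ) * t ^ 2 := by simp [Finset.sum_const, nsmul_eq_mul]
  have ht1 : t ≤ 1 := by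
    have : t ^ 2 ≤ ∑ i, ‖w i‖ ^ 2 := by
      apply Finset.single_le_sum (f := fun i => ‖w i‖ ^ 2)
        (fun i _ => sq_nonneg _) (Finset.mem_univ i₀)
    nlinarith [norm_nonneg (w i₀)]
  have htpos : 0 < t := by
    by_contra h
    push_neg at h
    have ht0 : t = 0 := le_antisymm h (norm_nonneg (w i₀))
    rw [ht0] at hnt
    norm_num at hnt
  have hw0 : w i₀ ≠ 0 := by
    intro h
    simp only [htdef, h, norm_zero] at htpos
    exact lt_irrefl _ htpos
  -- a = c - lam
  have hri₀ : r i₀ = A w i₀ - (lam : ℂ) * w i₀ := rfl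
  have ha : c - (lam : ℂ) = r i₀ / w i₀ := by
    rw [hc, hri₀]
    field_simp
  -- truncated vectors
  set w' : EuclideanSpace ℂ (Fin n) := WithLp.toLp 2 (fun i => if i = i₀ then 0 else w i) with hw'
  set r' : EuclideanSpace ℂ (Fin n) := WithLp.toLp 2 (fun i => if i = i₀ then 0 else r i) with hr'
  have hx : A w - c • w = r' - (r i₀ / w i₀) • w' := by
    ext i
    by_cases h : i = i₀
    · subst h
      simp only [PiLp.sub_apply, PiLp.smul_apply, hw', hr', PiLp.toLp_apply, if_pos rfl,
        smul_eq_mul, mul_zero, sub_zero, hc]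
      field_simp
      simp
    · simp only [PiLp.sub_apply, PiLp.smul_apply, hw', hr', PiLp.toLp_apply, if_neg h,
        smul_eq_mul]
      have hri : r i = A w i - (lam : ℂ) * w i := rfl
      rw [hri, hri₀, hc]
      field_simp
      ring
  -- norms of truncated vectors
  have hnorm_r' : ‖r'‖ ^ 2 = R ^ 2 - s ^ 2 := by
    have h2 : ‖r'‖ ^ 2 = ∑ i, ‖r' i‖ ^ 2 := by
      rw [EuclideanSpace.norm_eq]
      exact Real.sq_sqrt (Finset.sum_nonneg fun i _ => sq_nonneg _)
    have h3 : R ^ 2 = ∑ i, ‖r i‖ ^ 2 := by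
      rw [hRdef, EuclideanSpace.norm_eq]
      exact Real.sq_sqrt (Finset.sum_nonneg fun i _ => sq_nonneg _)
    have h4 : ∀ i, ‖r' i‖ ^ 2 = ‖r i‖ ^ 2 - (if i = i₀ then ‖r i₀‖ ^ 2 else 0) := by
      intro i
      have : r' i = if i = i₀ then 0 else r i := rfl
      by_cases h : i = i₀
      · subst h; simp [this]
      · simp [this, h]
    rw [h2, h3, Finset.sum_congr rfl (fun i _ => h4 i), Finset.sum_sub_distrib,
      Finset.sum_ite_eq' Finset.univ i₀ (fun _ => ‖r i₀‖ ^ 2)]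
    simp [hsdef]
  have hnorm_w' : ‖w'‖ ^ 2 = 1 - t ^ 2 := by
    have h2 : ‖w'‖ ^ 2 = ∑ i, ‖w' i‖ ^ 2 := by
      rw [EuclideanSpace.norm_eq]
      exact Real.sq_sqrt (Finset.sum_nonneg fun i _ => sq_nonneg _)
    have h4 : ∀ i, ‖w' i‖ ^ 2 = ‖w i‖ ^ 2 - (if i = i₀ then ‖w i₀‖ ^ 2 else 0) := by
      intro i
      have : w' i = if i = i₀ then 0 else w i := rfl
      by_cases h : i = i₀
      · subst h; simp [this]
      · simp [this, h]
    rw [h2, Finset.sum_congr rfl (fun i _ => h4 i), Finset.sum_sub_distrib,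
      Finset.sum_ite_eq' Finset.univ i₀ (fun _ => ‖w i₀‖ ^ 2), hsumw]
    simp [htdef]
  set p := ‖r'‖ with hpdef
  set q := ‖w'‖ with hqdef
  have hnorm_a : ‖r i₀ / w i₀‖ = s / t := by
    rw [norm_div, hsdef, htdef]
  -- triangle inequality
  have htri : ‖A w - c • w‖ ≤ p + (s / t) * q := by
    rw [hx]
    calc ‖r' - (r i₀ / w i₀) • w'‖ ≤ ‖r'‖ + ‖(r i₀ / w i₀) • w'‖ := norm_sub_le _ _
    _ = p + (s / t) * q := by rw [norm_smul, hnorm_a]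
  have hRnonneg : (0:ℝ) ≤ R := norm_nonneg _
  have hpnonneg : (0:ℝ) ≤ p := norm_nonneg _
  have hqnonneg : (0:ℝ) ≤ q := norm_nonneg _
  have hsnonneg : (0:ℝ) ≤ s := norm_nonneg _
  set N := ‖A w - c • w‖ with hNdef
  have hNnonneg : (0:ℝ) ≤ N := norm_nonneg _
  clear_value p q s t R N
  clear hNdef hx hnorm_a hri₀ ha hmax hRdef htdef hsdef hpdef hqdef hr hr' hw'
  clear hc heig hclose hsumw hw hv hA hAnorm
  clear hw0 hlam r' w' r c A w v lam i₀
  -- key algebraic inequality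
  have hkey : p * t + s * q ≤ R := by
    nlinarith [sq_nonneg (p * q - s * t), sq_nonneg (p * t + s * q),
      mul_nonneg (mul_nonneg hpnonneg htpos.le) (mul_nonneg hsnonneg hqnonneg)]
  have hfinal : p + (s / t) * q ≤ R / t := by
    rw [le_div_iff₀ htpos]
    have hexp : (p + (s / t) * q) * t = p * t + s * q := by
      field_simp
    rw [hexp]; exact hkey
  have hsqrt : 1 ≤ Real.sqrt n * t := by
    have h1 : Real.sqrt n ^ 2 = (n : ℝ) := Real.sq_sqrt (Nat.cast_nonneg n)
    nlinarith [sq_nonneg (Real.sqrt (n : ℝ) * t - 1), h1, hnt,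
      mul_nonneg (Real.sqrt_nonneg (n : ℝ)) htpos.le]
  have h6 : R / t ≤ R * Real.sqrt n := by
    rw [div_le_iff₀ htpos]
    nlinarith
  have h7 : R * Real.sqrt n ≤ 2 * δ * Real.sqrt n := by
    nlinarith [Real.sqrt_nonneg (n : ℝ)]
  have h8 : (0:ℝ) ≤ δ * Real.sqrt n := mul_nonneg hδpos.le (Real.sqrt_nonneg _)
  linarith [htri, hfinal, h6, h7, h8]
end

section
/- Let A be a δ-separated n×n Hermitian matrix with ‖A‖ ≤ 1, and let w be a unit vector and c a complex number with |c| ≤ 1 such that ‖Aw - cw‖ ≤ B where B ≤ δ²/100. Then there exists an eigenvalue λ of A with |c - λ| ≤ δ/10, and there exists a unit eigenvector v of A with eigenvalue λ such that ‖v - w‖ ≤ δ/30. -/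
set_option maxHeartbeats 1000000


/-- If `A` is a `δ`-separated Hermitian matrix (given by its eigendecomposition:
orthonormal eigenbasis `b`, eigenvalues `lam` strictly decreasing with gaps at least
`δ`, nonnegative, and `lam 0 ≤ 1 - δ`), `w` is a unit vector and `|c| ≤ 1` with
`‖Aw - cw‖ ≤ B ≤ δ²/100`, then some eigenvalue `lam i` satisfies `|c - lam i| ≤ δ/10`
and some unit eigenvector `v` for `lam i` satisfies `‖v - w‖ ≤ δ/30`. -/
theorem approx_eigval_eigvec (n : ℕ) (hn : 0 < n)
    (A : EuclideanSpace ℂ (Fin n) →L[ℂ] EuclideanSpace ℂ (Fin n))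
    (hA : IsSelfAdjoint A)
    (b : OrthonormalBasis (Fin n) ℂ (EuclideanSpace ℂ (Fin n)))
    (lam : Fin n → ℝ)
    (heig : ∀ i, A (b i) = (lam i : ℂ) • b i)
    (δ : ℝ) (hδpos : 0 < δ)
    (hsep : ∀ i j : Fin n, (i : ℕ) + 1 = j → lam i - lam j ≥ δ)
    (hpos : ∀ i, 0 ≤ lam i) (htop : lam ⟨0, hn⟩ ≤ 1 - δ)
    (w : EuclideanSpace ℂ (Fin n)) (hw : ‖w‖ = 1)
    (c : ℂ) (hc : ‖c‖ ≤ 1)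
    (B : ℝ) (hB : B ≤ δ ^ 2 / 100)
    (hres : ‖A w - c • w‖ ≤ B) :
    ∃ i : Fin n, ‖c - (lam i : ℂ)‖ ≤ δ / 10 ∧
      ∃ v : EuclideanSpace ℂ (Fin n), ‖v‖ = 1 ∧ A v = (lam i : ℂ) • v ∧
        ‖v - w‖ ≤ δ / 30 := by
  have hδ1 : δ ≤ 1 := by have := hpos ⟨0, hn⟩; linarith
  have hB0 : 0 ≤ B := le_trans (norm_nonneg _) hres
  -- coefficients of w
  set u : Fin n → ℂ := fun i => b.repr w i with hu
  -- antitone of lam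
  have hanti : ∀ m : ℕ, ∀ i j : Fin n, (i : ℕ) + m = j → lam j ≤ lam i := by
    intro m
    induction m with
    | zero => intro i j hij; have : i = j := Fin.ext (by omega); rw [this]
    | succ k ih =>
      intro i j hij
      have hik : (i : ℕ) + k < n := by omega
      set m : Fin n := ⟨(i : ℕ) + k, hik⟩
      have h1 : lam m ≤ lam i := ih i m rfl
      have h2 : lam m - lam j ≥ δ := hsep m j (by simp [m]; omega)
      linarith
  -- gap between distinct eigenvalues
  have hgap : ∀ i j : Fin n, i ≠ j → |lam i - lam j| ≥ δ := by
    have key : ∀ i j : Fin n, (i : ℕ) < j → lam i - lam j ≥ δ := by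
      intro i j hij
      have hi1 : (i : ℕ) + 1 < n := by have := j.isLt; omega
      set i' : Fin n := ⟨(i : ℕ) + 1, hi1⟩
      have h1 : lam i - lam i' ≥ δ := hsep i i' rfl
      have h2 : lam j ≤ lam i' := hanti ((j : ℕ) - (i : ℕ) - 1) i' j (by simp [i']; omega)
      linarith
    intro i j hij
    rcases lt_or_gt_of_ne (fun h => hij (Fin.ext h) : (i : ℕ) ≠ j) with h | h
    · have := key i j h; rw [abs_of_nonneg (by linarith)]; linarith
    · have := key j i h; rw [abs_of_nonpos (by linarith)]; linarith
  -- residual coefficients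
  have hrep : ∀ i : Fin n, b.repr (A w - c • w) i = ((lam i : ℂ) - c) * u i := by
    intro i
    have h1 : b.repr (A w - c • w) i = b.repr (A w) i - c * u i := by
      simp [map_sub, map_smul, hu, smul_eq_mul]
    have hsym : (inner ℂ (A (b i)) w : ℂ) = inner ℂ (b i) (A w) := by
      have := hA.isSymmetric (b i) w; simpa using this
    have h2 : b.repr (A w) i = (lam i : ℂ) * u i := by
      rw [b.repr_apply_apply, ← hsym, heig i, inner_smul_left,
        Complex.conj_ofReal, ← b.repr_apply_apply]
    rw [h1, h2]; ring
  -- norm-squared identities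
  have hnormsq : ∀ x : EuclideanSpace ℂ (Fin n), ‖x‖ ^ 2 = ∑ i, ‖b.repr x i‖ ^ 2 := by
    intro x
    rw [← b.repr.norm_map x, EuclideanSpace.norm_eq, Real.sq_sqrt]
    positivity
  have hsum1 : ∑ i, ‖u i‖ ^ 2 = 1 := by
    have := hnormsq w; rw [hw] at this; simpa [hu] using this.symm
  have hres2 : ∑ i, ‖(lam i : ℂ) - c‖ ^ 2 * ‖u i‖ ^ 2 ≤ B ^ 2 := by
    have h1 : ‖A w - c • w‖ ^ 2 ≤ B ^ 2 := by
      have := norm_nonneg (A w - c • w); nlinarith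
    rw [hnormsq (A w - c • w)] at h1
    calc ∑ i, ‖(lam i : ℂ) - c‖ ^ 2 * ‖u i‖ ^ 2
        = ∑ i, ‖b.repr (A w - c • w) i‖ ^ 2 := by
          refine Finset.sum_congr rfl fun i _ => ?_
          rw [hrep i, norm_mul, mul_pow]
      _ ≤ B ^ 2 := h1
  -- choose the closest eigenvalue
  obtain ⟨i₀, -, hmin⟩ := Finset.exists_min_image Finset.univ
    (fun i => ‖c - (lam i : ℂ)‖) ⟨⟨0, hn⟩, Finset.mem_univ _⟩
  have hmin' : ∀ j, ‖c - (lam i₀ : ℂ)‖ ≤ ‖c - (lam j : ℂ)‖ := fun j => hmin j (Finset.mem_univ _)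
  -- Step 1 : |c - lam i₀| ≤ B
  have hstep1 : ‖c - (lam i₀ : ℂ)‖ ≤ B := by
    have h1 : ‖c - (lam i₀ : ℂ)‖ ^ 2 ≤ B ^ 2 := by
      calc ‖c - (lam i₀ : ℂ)‖ ^ 2 = ∑ i, ‖c - (lam i₀ : ℂ)‖ ^ 2 * ‖u i‖ ^ 2 := by
            rw [← Finset.mul_sum, hsum1, mul_one]
        _ ≤ ∑ i, ‖(lam i : ℂ) - c‖ ^ 2 * ‖u i‖ ^ 2 := by
            refine Finset.sum_le_sum fun i _ => ?_
            have h2 : ‖c - (lam i₀ : ℂ)‖ ≤ ‖(lam i : ℂ) - c‖ := by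
              rw [show ((lam i : ℂ) - c) = -(c - (lam i : ℂ)) by ring, norm_neg]
              exact hmin' i
            exact mul_le_mul_of_nonneg_right
              (pow_le_pow_left₀ (norm_nonneg _) h2 2) (sq_nonneg _)
        _ ≤ B ^ 2 := hres2
    nlinarith [norm_nonneg (c - (lam i₀ : ℂ))]
  have hδB : (0:ℝ) < δ - B := by nlinarith
  -- Step 2 : mass outside i₀ is small
  have hout : ∀ j : Fin n, j ≠ i₀ → δ - B ≤ ‖(lam j : ℂ) - c‖ := by
    intro j hj
    have h2 : |lam j - lam i₀| ≤ ‖(lam j : ℂ) - c‖ + ‖(lam i₀ : ℂ) - c‖ := by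
      calc |lam j - lam i₀| = ‖((lam j : ℂ) - (lam i₀ : ℂ))‖ := by
            rw [show ((lam j : ℂ) - (lam i₀ : ℂ)) = ((lam j - lam i₀ : ℝ) : ℂ) by
              push_cast; ring, Complex.norm_real, Real.norm_eq_abs]
        _ = ‖((lam j : ℂ) - c) - ((lam i₀ : ℂ) - c)‖ := by ring_nf
        _ ≤ _ := norm_sub_le _ _
    have h3 : δ ≤ |lam j - lam i₀| := hgap j i₀ hj
    have h4 : ‖(lam i₀ : ℂ) - c‖ ≤ B := by
      rw [show ((lam i₀ : ℂ) - c) = -(c - (lam i₀ : ℂ)) by ring, norm_neg]; exact hstep1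
    linarith
  set S : ℝ := ∑ j ∈ Finset.univ.erase i₀, ‖u j‖ ^ 2 with hS
  have hSnonneg : 0 ≤ S := Finset.sum_nonneg fun j _ => by positivity
  have hSsmall : (δ - B) ^ 2 * S ≤ B ^ 2 := by
    calc (δ - B) ^ 2 * S = ∑ j ∈ Finset.univ.erase i₀, (δ - B) ^ 2 * ‖u j‖ ^ 2 := by
          rw [hS, Finset.mul_sum]
      _ ≤ ∑ j ∈ Finset.univ.erase i₀, ‖(lam j : ℂ) - c‖ ^ 2 * ‖u j‖ ^ 2 := by
          refine Finset.sum_le_sum fun j hj => ?_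
          exact mul_le_mul_of_nonneg_right
            (pow_le_pow_left₀ hδB.le (hout j (Finset.ne_of_mem_erase hj)) 2) (sq_nonneg _)
      _ ≤ ∑ j, ‖(lam j : ℂ) - c‖ ^ 2 * ‖u j‖ ^ 2 := by
          refine Finset.sum_le_sum_of_subset_of_nonneg (Finset.erase_subset _ _)
            fun j _ _ => by positivity
      _ ≤ B ^ 2 := hres2
  have hsplit : ‖u i₀‖ ^ 2 + S = 1 := by
    rw [hS, Finset.add_sum_erase Finset.univ (fun j => ‖u j‖ ^ 2) (Finset.mem_univ i₀)]
    exact hsum1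
  -- S ≤ δ^2/9801
  have hSbound : S ≤ δ ^ 2 / 9801 := by
    have h1 : (99 * δ / 100) ^ 2 * S ≤ (δ - B) ^ 2 * S := by
      have h99 : 99 * δ / 100 ≤ δ - B := by nlinarith
      exact mul_le_mul_of_nonneg_right (pow_le_pow_left₀ (by positivity) h99 2) hSnonneg
    have h2 : B ^ 2 ≤ (δ ^ 2 / 100) ^ 2 := by nlinarith
    nlinarith [mul_pos hδpos hδpos]
  have hui2 : 1 - δ ^ 2 / 9801 ≤ ‖u i₀‖ ^ 2 := by linarith
  have hui0 : u i₀ ≠ 0 := by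
    intro h
    rw [h] at hui2; simp at hui2; nlinarith [hδ1, hδpos]
  have huin : (0:ℝ) < ‖u i₀‖ := norm_pos_iff.mpr hui0
  have hεle : δ ^ 2 / 9801 ≤ 1 / 9801 := by nlinarith
  have hui : 1 - δ ^ 2 / 9801 ≤ ‖u i₀‖ := by
    nlinarith [hui2, norm_nonneg (u i₀), hεle]
  -- build the eigenvector
  set v : EuclideanSpace ℂ (Fin n) := ((‖u i₀‖ : ℂ)⁻¹ * u i₀) • b i₀ with hv
  have hvnorm : ‖v‖ = 1 := by
    rw [hv, norm_smul, b.orthonormal.1 i₀, norm_mul, norm_inv, Complex.norm_real,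
      Real.norm_eq_abs, abs_of_nonneg (norm_nonneg _), mul_one, inv_mul_cancel₀ huin.ne']
  refine ⟨i₀, ?_, v, hvnorm, ?_, ?_⟩
  · calc ‖c - (lam i₀ : ℂ)‖ ≤ B := hstep1
      _ ≤ δ ^ 2 / 100 := hB
      _ ≤ δ / 10 := by nlinarith
  · rw [hv, map_smul, heig i₀, smul_comm]
  · have hinner : (inner ℂ v w : ℂ) = (‖u i₀‖ : ℂ) := by
      have hbr : (inner ℂ (b i₀) w : ℂ) = u i₀ := (b.repr_apply_apply w i₀).symm
      have hc2 : (starRingEnd ℂ) (u i₀) * u i₀ = ((‖u i₀‖ : ℝ) : ℂ) ^ 2 := by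
        rw [Complex.conj_mul']
      have hne : ((‖u i₀‖ : ℝ) : ℂ) ≠ 0 := by
        simpa using huin.ne'
      rw [hv, inner_smul_left, hbr, map_mul, map_inv₀, Complex.conj_ofReal, mul_assoc, hc2,
        sq, ← mul_assoc, inv_mul_cancel₀ hne, one_mul]
    have hsq : ‖v - w‖ ^ 2 = 2 - 2 * ‖u i₀‖ := by
      rw [norm_sub_sq (𝕜 := ℂ), hinner, hvnorm, hw]
      simp
      try ring
    have h1 : ‖v - w‖ ^ 2 ≤ (δ / 30) ^ 2 := by
      rw [hsq]; nlinarith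
    nlinarith [norm_nonneg (v - w), h1, hδpos]
end
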